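/- Let w:[a,b]→[0,∞) be integrable with m(a,b)=∫_a^b w < ∞, and similarly on [c,d] with m(c,d)=∫_c^d w. Let f:[a,b]×[c,d]→ℝ be C² (absolutely continuous with mixed second partial derivative existing). Define p(x,t)=∫_a^t w(u)du for a≤t<x and p(x,t)=∫_b^t w(u)du for x≤t≤b, and q(y,s)=∫_c^s w(u)du for c≤s<y and q(y,s)=∫_d^s w(u)du for y≤s≤d. Then for all (x,y)∈[a,b]×[c,d]: ∫_a^b∫_c^d p(x,t)q(y,s)·∂²f/∂t∂s(t,s) ds dt = m(a,b)m(c,d)f(x,y) - m(c,d)∫_a^b w(t)f(t,y)dt - m(a,b)∫_c^d w(s)f(x,s)ds + ∫_a^b∫_c^d w(t)w(s)f(t,s) ds dt. -/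

import Mathlib

open Set MeasureTheory intervalIntegral

open Function

private lemma ae_ne_vol (x : ℝ) : ∀ᵐ t : ℝ, t ≠ x := by
  rw [ae_iff]
  have : {t : ℝ | ¬ t ≠ x} = {x} := by ext t; simp
  rw [this]
  exact measure_singleton x

private lemma tri_left (α x : ℝ) (hax : α ≤ x) (w h : ℝ → ℝ)
    (hw : Integrable w) (hh : Continuous h) :
    ∫ t in α..x, (∫ u in α..t, w u) * h t = ∫ u in α..x, w u * ∫ t in u..x, h t := by
  have hins : MeasurableSet {p : ℝ × ℝ | p.1 ≤ p.2} :=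
    measurableSet_le measurable_fst measurable_snd
  set μ := volume.restrict (Ioc α x) with hμ
  set F : ℝ → ℝ → ℝ :=
    fun u t => ({p : ℝ × ℝ | p.1 ≤ p.2}.indicator fun p => w p.1 * h p.2) (u, t) with hF
  have hint : Integrable (uncurry F) (μ.prod μ) := by
    have : Integrable ({p : ℝ × ℝ | p.1 ≤ p.2}.indicator fun p => w p.1 * h p.2) (μ.prod μ) :=
      Integrable.indicator (hw.restrict.mul_prod hh.integrableOn_Ioc) hins
    exact this
  rw [integral_of_le hax, integral_of_le hax]
  calc ∫ t in Ioc α x, (∫ u in α..t, w u) * h t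
      = ∫ t in Ioc α x, ∫ u in Ioc α x, F u t := by
        refine setIntegral_congr_fun measurableSet_Ioc fun t ht => ?_
        have h1 : (fun u => F u t) = (Iic t).indicator fun u => w u * h t := by
          ext u; by_cases hu : u ≤ t <;> simp [hF, Set.indicator_apply, hu]
        have h2 : Iic t ∩ Ioc α x = Ioc α t := by
          ext u
          simp only [mem_inter_iff, mem_Iic, mem_Ioc]
          exact ⟨fun ⟨h1', h2', _⟩ => ⟨h2', h1'⟩, fun ⟨h1', h2'⟩ => ⟨h2', h1', h2'.trans ht.2⟩⟩
        rw [h1, MeasureTheory.integral_indicator measurableSet_Iic,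
          Measure.restrict_restrict measurableSet_Iic, h2, MeasureTheory.integral_mul_const,
          integral_of_le ht.1.le]
    _ = ∫ u in Ioc α x, ∫ t in Ioc α x, F u t := (integral_integral_swap hint).symm
    _ = ∫ u in Ioc α x, w u * ∫ t in u..x, h t := by
        refine setIntegral_congr_fun measurableSet_Ioc fun u hu => ?_
        have h1 : (fun t => F u t) = (Ici u).indicator fun t => w u * h t := by
          ext t; by_cases ht : u ≤ t <;> simp [hF, Set.indicator_apply, ht]
        have h2 : Ici u ∩ Ioc α x = Icc u x := by
          ext t
          simp only [mem_inter_iff, mem_Ici, mem_Ioc, mem_Icc]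
          exact ⟨fun ⟨h1', _, h3'⟩ => ⟨h1', h3'⟩, fun ⟨h1', h2'⟩ => ⟨h1', hu.1.trans_le h1', h2'⟩⟩
        rw [h1, MeasureTheory.integral_indicator measurableSet_Ici,
          Measure.restrict_restrict measurableSet_Ici, h2, MeasureTheory.integral_const_mul,
          integral_Icc_eq_integral_Ioc, integral_of_le hu.2]

private lemma tri_right' (x β : ℝ) (hxb : x ≤ β) (w h : ℝ → ℝ)
    (hw : Integrable w) (hh : Continuous h) :
    ∫ t in x..β, (∫ u in t..β, w u) * h t = ∫ u in x..β, w u * ∫ t in x..u, h t := by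
  have hins : MeasurableSet {p : ℝ × ℝ | p.2 ≤ p.1} :=
    measurableSet_le measurable_snd measurable_fst
  set μ := volume.restrict (Ioc x β) with hμ
  set F : ℝ → ℝ → ℝ :=
    fun u t => ({p : ℝ × ℝ | p.2 ≤ p.1}.indicator fun p => w p.1 * h p.2) (u, t) with hF
  have hint : Integrable (uncurry F) (μ.prod μ) := by
    have : Integrable ({p : ℝ × ℝ | p.2 ≤ p.1}.indicator fun p => w p.1 * h p.2) (μ.prod μ) :=
      Integrable.indicator (hw.restrict.mul_prod hh.integrableOn_Ioc) hins
    exact this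
  rw [integral_of_le hxb, integral_of_le hxb]
  calc ∫ t in Ioc x β, (∫ u in t..β, w u) * h t
      = ∫ t in Ioc x β, ∫ u in Ioc x β, F u t := by
        refine setIntegral_congr_fun measurableSet_Ioc fun t ht => ?_
        have h1 : (fun u => F u t) = (Ici t).indicator fun u => w u * h t := by
          ext u; by_cases hu : t ≤ u <;> simp [hF, Set.indicator_apply, hu]
        have h2 : Ici t ∩ Ioc x β = Icc t β := by
          ext u
          simp only [mem_inter_iff, mem_Ici, mem_Ioc, mem_Icc]
          exact ⟨fun ⟨h1', _, h3'⟩ => ⟨h1', h3'⟩, fun ⟨h1', h2'⟩ => ⟨h1', ht.1.trans_le h1', h2'⟩⟩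
        rw [h1, MeasureTheory.integral_indicator measurableSet_Ici,
          Measure.restrict_restrict measurableSet_Ici, h2, MeasureTheory.integral_mul_const,
          integral_Icc_eq_integral_Ioc, integral_of_le ht.2]
    _ = ∫ u in Ioc x β, ∫ t in Ioc x β, F u t := (integral_integral_swap hint).symm
    _ = ∫ u in Ioc x β, w u * ∫ t in x..u, h t := by
        refine setIntegral_congr_fun measurableSet_Ioc fun u hu => ?_
        have h1 : (fun t => F u t) = (Iic u).indicator fun t => w u * h t := by
          ext t; by_cases ht : t ≤ u <;> simp [hF, Set.indicator_apply, ht]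
        have h2 : Iic u ∩ Ioc x β = Ioc x u := by
          ext t
          simp only [mem_inter_iff, mem_Iic, mem_Ioc]
          exact ⟨fun ⟨h1', h2', _⟩ => ⟨h2', h1'⟩, fun ⟨h1', h2'⟩ => ⟨h2', h1', h2'.trans hu.2⟩⟩
        rw [h1, MeasureTheory.integral_indicator measurableSet_Iic,
          Measure.restrict_restrict measurableSet_Iic, h2, MeasureTheory.integral_const_mul,
          integral_of_le hu.1.le]

private lemma mont (α β x : ℝ) (hx : x ∈ Icc α β) (w h : ℝ → ℝ)
    (hw : Integrable w) (hh : Continuous h) :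
    ∫ t in α..β, (if t < x then ∫ u in α..t, w u else ∫ u in β..t, w u) * h t
      = ∫ t in α..β, w t * ∫ u in t..x, h u := by
  obtain ⟨hax, hxb⟩ := hx
  have W1c : Continuous fun t => ∫ u in α..t, w u := hw.continuous_primitive α
  have W2c : Continuous fun t => ∫ u in β..t, w u := hw.continuous_primitive β
  set K : ℝ → ℝ := fun t => if t < x then ∫ u in α..t, w u else ∫ u in β..t, w u with hK
  have haeK : (fun t => (∫ u in α..t, w u) * h t) =ᵐ[volume.restrict (Ioc α x)]
      fun t => K t * h t := by
    filter_upwards [ae_restrict_of_ae (ae_ne_vol x), ae_restrict_mem measurableSet_Ioc]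
      with t hne hmem
    have htx : t < x := lt_of_le_of_ne hmem.2 hne
    simp [hK, htx]
  have i1' : IntervalIntegrable (fun t => (∫ u in α..t, w u) * h t) volume α x :=
    (W1c.mul hh).intervalIntegrable α x
  have i1 : IntervalIntegrable (fun t => K t * h t) volume α x := by
    constructor
    · exact i1'.1.congr haeK
    · rw [Ioc_eq_empty (not_lt.2 hax)]; exact integrableOn_empty
  have i2 : IntervalIntegrable (fun t => K t * h t) volume x β := by
    constructor
    · refine ((W2c.mul hh).intervalIntegrable x β).1.congr ?_
      filter_upwards [ae_restrict_mem measurableSet_Ioc] with t ht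
      have : ¬ t < x := not_lt.2 ht.1.le
      simp [hK, this]
    · rw [Ioc_eq_empty (not_lt.2 hxb)]; exact integrableOn_empty
  have e1 : ∫ t in α..x, K t * h t = ∫ t in α..x, (∫ u in α..t, w u) * h t := by
    refine integral_congr_ae ?_
    filter_upwards [ae_ne_vol x] with t hne hmem
    rw [uIoc_of_le hax] at hmem
    have htx : t < x := lt_of_le_of_ne hmem.2 hne
    simp [hK, htx]
  have e2 : ∫ t in x..β, K t * h t = ∫ t in x..β, (∫ u in β..t, w u) * h t := by
    refine integral_congr fun t ht => ?_
    rw [uIcc_of_le hxb] at ht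
    have : ¬ t < x := not_lt.2 ht.1
    simp [hK, this]
  have e2' : ∫ t in x..β, (∫ u in β..t, w u) * h t = ∫ u in x..β, w u * ∫ t in u..x, h t := by
    have : ∀ t : ℝ, (∫ u in β..t, w u) * h t = -((∫ u in t..β, w u) * h t) := by
      intro t; rw [integral_symm]; ring
    rw [intervalIntegral.integral_congr fun t _ => this t, intervalIntegral.integral_neg,
      tri_right' x β hxb w h hw hh, ← intervalIntegral.integral_neg]
    refine intervalIntegral.integral_congr fun u _ => ?_
    rw [integral_symm]; ring
  have Φc : Continuous fun u => ∫ t in u..x, h t := by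
    have : (fun u => ∫ t in u..x, h t) = fun u => -∫ t in x..u, h t := by
      funext u; rw [integral_symm]
    rw [this]
    exact (intervalIntegral.continuous_primitive (fun a b => hh.intervalIntegrable a b) x).neg
  have iw1 : IntervalIntegrable (fun u => w u * ∫ t in u..x, h t) volume α x :=
    (hw.intervalIntegrable).mul_continuousOn Φc.continuousOn
  have iw2 : IntervalIntegrable (fun u => w u * ∫ t in u..x, h t) volume x β :=
    (hw.intervalIntegrable).mul_continuousOn Φc.continuousOn
  rw [← integral_add_adjacent_intervals i1 i2, ← integral_add_adjacent_intervals iw1 iw2,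
    e1, e2, e2', tri_left α x hax w h hw hh]

private lemma swap_rect {a b c d : ℝ} (hab : a ≤ b) (hcd : c ≤ d) (F : ℝ → ℝ → ℝ)
    (hF : Integrable (uncurry F)
      ((volume.restrict (Ioc a b)).prod (volume.restrict (Ioc c d)))) :
    ∫ t in a..b, ∫ s in c..d, F t s = ∫ s in c..d, ∫ t in a..b, F t s := by
  rw [integral_of_le hab, integral_of_le hcd]
  simp_rw [integral_of_le hcd, integral_of_le hab]
  exact integral_integral_swap hF

private lemma integrable_rect {a b c d : ℝ} {u v : ℝ → ℝ} {G : ℝ × ℝ → ℝ}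
    (hu : IntegrableOn u (Ioc a b)) (hv : IntegrableOn v (Ioc c d))
    (hG : AEStronglyMeasurable G ((volume.restrict (Ioc a b)).prod (volume.restrict (Ioc c d))))
    {D : ℝ} (hGb : ∀ p ∈ Ioc a b ×ˢ Ioc c d, ‖G p‖ ≤ D) :
    Integrable (fun z : ℝ × ℝ => u z.1 * (v z.2 * G z))
      ((volume.restrict (Ioc a b)).prod (volume.restrict (Ioc c d))) := by
  have h1 : Integrable (fun z : ℝ × ℝ => ‖u z.1‖ * ‖v z.2‖)
      ((volume.restrict (Ioc a b)).prod (volume.restrict (Ioc c d))) :=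
    hu.norm.mul_prod hv.norm
  refine (h1.mul_const D).mono'
    ((hu.aestronglyMeasurable.comp_fst).mul ((hv.aestronglyMeasurable.comp_snd).mul hG)) ?_
  have hmem : ∀ᵐ z ∂((volume.restrict (Ioc a b)).prod (volume.restrict (Ioc c d))),
      z ∈ Ioc a b ×ˢ Ioc c d := by
    rw [Measure.prod_restrict]
    exact ae_restrict_mem (measurableSet_Ioc.prod measurableSet_Ioc)
  filter_upwards [hmem] with z hz
  have hD := hGb z hz
  have h0 : (0:ℝ) ≤ ‖G z‖ := norm_nonneg _
  calc ‖u z.1 * (v z.2 * G z)‖ = ‖u z.1‖ * ‖v z.2‖ * ‖G z‖ := by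
        rw [norm_mul, norm_mul]; ring
    _ ≤ ‖u z.1‖ * ‖v z.2‖ * D := by
        have : (0:ℝ) ≤ ‖u z.1‖ * ‖v z.2‖ := mul_nonneg (norm_nonneg _) (norm_nonneg _)
        exact mul_le_mul_of_nonneg_left hD this

theorem weighted_ostrowski_lemma (a b c d : ℝ) (hab : a < b) (hcd : c < d)
    (w : ℝ → ℝ) (hw0 : ∀ u ∈ Icc a b ∪ Icc c d, 0 ≤ w u)
    (hwab : IntervalIntegrable w volume a b)
    (hwcd : IntervalIntegrable w volume c d)
    (f fx fxy : ℝ → ℝ → ℝ)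
    (hfc : ContinuousOn (fun p : ℝ × ℝ => f p.1 p.2) (Icc a b ×ˢ Icc c d))
    (hfx : ∀ x ∈ Icc a b, ∀ y ∈ Icc c d, HasDerivAt (fun t => f t y) (fx x y) x)
    (hfxy : ∀ x ∈ Icc a b, ∀ y ∈ Icc c d, HasDerivAt (fun s => fx x s) (fxy x y) y)
    (hfxyc : ContinuousOn (fun p : ℝ × ℝ => fxy p.1 p.2) (Icc a b ×ˢ Icc c d)) :
    ∀ x ∈ Icc a b, ∀ y ∈ Icc c d,
      (∫ t in a..b, ∫ s in c..d,
          (if t < x then ∫ u in a..t, w u else ∫ u in b..t, w u) *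
            (if s < y then ∫ u in c..s, w u else ∫ u in d..s, w u) * fxy t s) =
        (∫ u in a..b, w u) * (∫ u in c..d, w u) * f x y -
          (∫ u in c..d, w u) * (∫ t in a..b, w t * f t y) -
          (∫ u in a..b, w u) * (∫ s in c..d, w s * f x s) +
          ∫ t in a..b, ∫ s in c..d, w t * w s * f t s := by
  intro x hx y hy
  have hab' : a ≤ b := hab.le
  have hcd' : c ≤ d := hcd.le
  have hrect : IsClosed (Icc a b ×ˢ Icc c d : Set (ℝ × ℝ)) := isClosed_Icc.prod isClosed_Icc
  -- Tietze extensions of fxy and f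
  obtain ⟨g, hgc, hg⟩ : ∃ g : ℝ × ℝ → ℝ, Continuous g ∧
      ∀ u v, u ∈ Icc a b → v ∈ Icc c d → g (u, v) = fxy u v := by
    obtain ⟨g', hg'⟩ := ContinuousMap.exists_restrict_eq (Y := ℝ) hrect ⟨_, hfxyc.restrict⟩
    refine ⟨g', g'.continuous, fun u v hu hv => ?_⟩
    have := DFunLike.congr_fun hg' ⟨(u, v), ⟨hu, hv⟩⟩
    simpa using this
  obtain ⟨gf, hgfc, hgf⟩ : ∃ gf : ℝ × ℝ → ℝ, Continuous gf ∧
      ∀ u v, u ∈ Icc a b → v ∈ Icc c d → gf (u, v) = f u v := by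
    obtain ⟨g', hg'⟩ := ContinuousMap.exists_restrict_eq (Y := ℝ) hrect ⟨_, hfc.restrict⟩
    refine ⟨g', g'.continuous, fun u v hu hv => ?_⟩
    have := DFunLike.congr_fun hg' ⟨(u, v), ⟨hu, hv⟩⟩
    simpa using this
  -- globally integrable truncations of w
  set w1 : ℝ → ℝ := (Icc a b).indicator w with hw1def
  set w2 : ℝ → ℝ := (Icc c d).indicator w with hw2def
  have hw1 : Integrable w1 := by
    rw [hw1def, integrable_indicator_iff measurableSet_Icc]
    exact (integrableOn_Icc_iff_integrableOn_Ioc).2 hwab.1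
  have hw2 : Integrable w2 := by
    rw [hw2def, integrable_indicator_iff measurableSet_Icc]
    exact (integrableOn_Icc_iff_integrableOn_Ioc).2 hwcd.1
  have hw1e : ∀ u ∈ Icc a b, w1 u = w u := fun u hu => indicator_of_mem hu w
  have hw2e : ∀ u ∈ Icc c d, w2 u = w u := fun u hu => indicator_of_mem hu w
  have hsubab : ∀ {t₁ t₂ : ℝ}, t₁ ∈ Icc a b → t₂ ∈ Icc a b → uIcc t₁ t₂ ⊆ Icc a b := by
    intro t₁ t₂ h1 h2
    rw [← uIcc_of_le hab']
    exact uIcc_subset_uIcc (by rwa [uIcc_of_le hab']) (by rwa [uIcc_of_le hab'])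
  have hsubcd : ∀ {t₁ t₂ : ℝ}, t₁ ∈ Icc c d → t₂ ∈ Icc c d → uIcc t₁ t₂ ⊆ Icc c d := by
    intro t₁ t₂ h1 h2
    rw [← uIcc_of_le hcd']
    exact uIcc_subset_uIcc (by rwa [uIcc_of_le hcd']) (by rwa [uIcc_of_le hcd'])
  -- the kernels with truncated weights
  set P : ℝ → ℝ := fun t => if t < x then ∫ u in a..t, w1 u else ∫ u in b..t, w1 u with hPdef
  set Q : ℝ → ℝ := fun s => if s < y then ∫ u in c..s, w2 u else ∫ u in d..s, w2 u with hQdef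
  have hker1 : ∀ t ∈ Icc a b,
      (if t < x then ∫ u in a..t, w u else ∫ u in b..t, w u) = P t := by
    intro t ht
    have e1 : ∫ u in a..t, w u = ∫ u in a..t, w1 u :=
      intervalIntegral.integral_congr fun u hu =>
        (hw1e u (hsubab (left_mem_Icc.2 hab') ht hu)).symm
    have e2 : ∫ u in b..t, w u = ∫ u in b..t, w1 u :=
      intervalIntegral.integral_congr fun u hu =>
        (hw1e u (hsubab (right_mem_Icc.2 hab') ht hu)).symm
    rw [hPdef]; by_cases h : t < x <;> simp [h, e1, e2]
  have hker2 : ∀ s ∈ Icc c d,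
      (if s < y then ∫ u in c..s, w u else ∫ u in d..s, w u) = Q s := by
    intro s hs
    have e1 : ∫ u in c..s, w u = ∫ u in c..s, w2 u :=
      intervalIntegral.integral_congr fun u hu =>
        (hw2e u (hsubcd (left_mem_Icc.2 hcd') hs hu)).symm
    have e2 : ∫ u in d..s, w u = ∫ u in d..s, w2 u :=
      intervalIntegral.integral_congr fun u hu =>
        (hw2e u (hsubcd (right_mem_Icc.2 hcd') hs hu)).symm
    rw [hQdef]; by_cases h : s < y <;> simp [h, e1, e2]
  -- continuity facts
  set G0 : ℝ × ℝ → ℝ := fun p => ∫ v in p.2..y, g (p.1, v) with hG0def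
  have hG0c : Continuous G0 := by
    have h1 : Continuous fun q : ℝ × ℝ => ∫ v in y..q.2, g (q.1, v) :=
      continuous_parametric_primitive_of_continuous (f := fun t v => g (t, v)) hgc
    have h2 : G0 = fun p : ℝ × ℝ => -∫ v in y..p.2, g (p.1, v) :=
      funext fun p => integral_symm y p.2
    rw [h2]; exact h1.neg
  set M0 : ℝ × ℝ → ℝ := fun p => ∫ u in p.1..x, G0 (u, p.2) with hM0def
  have hM0c : Continuous M0 := by
    have h1 : Continuous fun q : ℝ × ℝ => ∫ u in x..q.2, G0 (u, q.1) :=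
      continuous_parametric_primitive_of_continuous (f := fun s u => G0 (u, s))
        (hG0c.comp continuous_swap)
    have h2 : M0 = fun p : ℝ × ℝ => -∫ u in x..p.1, G0 (u, p.2) :=
      funext fun p => integral_symm x p.1
    rw [h2]
    exact (h1.comp (continuous_snd.prodMk continuous_fst)).neg
  set R' : ℝ × ℝ → ℝ := fun p => f x y - gf (x, p.2) - gf (p.1, y) + gf p with hR'def
  have hR'c : Continuous R' := by
    refine ((continuous_const.sub
      (hgfc.comp (continuous_const.prodMk continuous_snd))).sub
      (hgfc.comp (continuous_fst.prodMk continuous_const))).add hgfc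
  -- measurability and bounds for P
  have hPm : Measurable P := by
    rw [hPdef]
    exact Measurable.ite measurableSet_Iio (hw1.continuous_primitive a).measurable
      (hw1.continuous_primitive b).measurable
  obtain ⟨C1, hC1⟩ := isCompact_Icc.exists_bound_of_continuousOn
    (hw1.continuous_primitive a).continuousOn (s := Icc a b)
  obtain ⟨C2, hC2⟩ := isCompact_Icc.exists_bound_of_continuousOn
    (hw1.continuous_primitive b).continuousOn (s := Icc a b)
  have hPb : ∀ t ∈ Icc a b, ‖P t‖ ≤ max C1 C2 := by
    intro t ht
    rw [hPdef]
    by_cases h : t < x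
    · simpa [h] using (hC1 t ht).trans (le_max_left _ _)
    · simpa [h] using (hC2 t ht).trans (le_max_right _ _)
  have hPint : IntegrableOn P (Ioc a b) := by
    refine Integrable.mono' (g := fun _ => max C1 C2)
      (integrableOn_const measure_Ioc_lt_top.ne) hPm.aestronglyMeasurable ?_
    filter_upwards [ae_restrict_mem measurableSet_Ioc] with t ht
    exact hPb t (Ioc_subset_Icc_self ht)
  -- bounds for the continuous kernels on the rectangle
  obtain ⟨DG, hDG⟩ := (isCompact_Icc.prod isCompact_Icc).exists_bound_of_continuousOn
    hG0c.continuousOn (s := Icc a b ×ˢ Icc c d)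
  obtain ⟨DM, hDM⟩ := ((isCompact_Icc (a := c) (b := d)).prod
    (isCompact_Icc (a := a) (b := b))).exists_bound_of_continuousOn
    (hM0c.comp continuous_swap).continuousOn (s := Icc c d ×ˢ Icc a b)
  obtain ⟨DR, hDR⟩ := (isCompact_Icc.prod isCompact_Icc).exists_bound_of_continuousOn
    hR'c.continuousOn (s := Icc a b ×ˢ Icc c d)
  obtain ⟨Df, hDf⟩ := (isCompact_Icc.prod isCompact_Icc).exists_bound_of_continuousOn
    hgfc.continuousOn (s := Icc a b ×ˢ Icc c d)
  -- Step 1: replace w by truncations and fxy by its extension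
  have step1 : (∫ t in a..b, ∫ s in c..d,
        (if t < x then ∫ u in a..t, w u else ∫ u in b..t, w u) *
          (if s < y then ∫ u in c..s, w u else ∫ u in d..s, w u) * fxy t s)
      = ∫ t in a..b, ∫ s in c..d, Q s * (P t * g (t, s)) := by
    refine intervalIntegral.integral_congr fun t ht => ?_
    rw [uIcc_of_le hab'] at ht
    refine intervalIntegral.integral_congr fun s hs => ?_
    rw [uIcc_of_le hcd'] at hs
    rw [hker1 t ht, hker2 s hs, ← hg t s ht hs]
    ring
  -- Step 2: Montgomery identity in the s variable
  have step2 : (∫ t in a..b, ∫ s in c..d, Q s * (P t * g (t, s)))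
      = ∫ t in a..b, ∫ s in c..d, P t * (w2 s * G0 (t, s)) := by
    refine intervalIntegral.integral_congr fun t ht => ?_
    have hcont : Continuous fun s => P t * g (t, s) :=
      continuous_const.mul (hgc.comp (Continuous.prodMk_right t))
    have e1 : (∫ s in c..d, Q s * (P t * g (t, s)))
        = ∫ s in c..d, w2 s * ∫ v in s..y, P t * g (t, v) :=
      mont c d y hy w2 (fun s => P t * g (t, s)) hw2 hcont
    have e2 : (∫ s in c..d, w2 s * ∫ v in s..y, P t * g (t, v))
        = ∫ s in c..d, P t * (w2 s * G0 (t, s)) := by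
      refine intervalIntegral.integral_congr fun s _ => ?_
      rw [intervalIntegral.integral_const_mul]
      exact mul_left_comm _ _ _
    exact e1.trans e2
  -- Step 3: Fubini
  have hint1 : Integrable (uncurry fun t s => P t * (w2 s * G0 (t, s)))
      ((volume.restrict (Ioc a b)).prod (volume.restrict (Ioc c d))) := by
    exact integrable_rect hPint hw2.integrableOn hG0c.aestronglyMeasurable
      (fun p hp => hDG p ⟨Ioc_subset_Icc_self hp.1, Ioc_subset_Icc_self hp.2⟩)
  have step3 : (∫ t in a..b, ∫ s in c..d, P t * (w2 s * G0 (t, s)))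
      = ∫ s in c..d, ∫ t in a..b, P t * (w2 s * G0 (t, s)) :=
    swap_rect hab' hcd' _ hint1
  -- Step 4: Montgomery identity in the t variable
  have step4 : (∫ s in c..d, ∫ t in a..b, P t * (w2 s * G0 (t, s)))
      = ∫ s in c..d, ∫ t in a..b, w1 t * (w2 s * M0 (t, s)) := by
    refine intervalIntegral.integral_congr fun s _ => ?_
    have hcont : Continuous fun u => w2 s * G0 (u, s) :=
      continuous_const.mul (hG0c.comp (continuous_id.prodMk continuous_const))
    have e1 : (∫ t in a..b, P t * (w2 s * G0 (t, s)))
        = ∫ t in a..b, w1 t * ∫ u in t..x, w2 s * G0 (u, s) :=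
      mont a b x hx w1 (fun u => w2 s * G0 (u, s)) hw1 hcont
    have e2 : (∫ t in a..b, w1 t * ∫ u in t..x, w2 s * G0 (u, s))
        = ∫ t in a..b, w1 t * (w2 s * M0 (t, s)) := by
      refine intervalIntegral.integral_congr fun t _ => ?_
      rw [intervalIntegral.integral_const_mul]
    exact e1.trans e2
  -- Step 5: Fubini back
  have hint2 : Integrable (uncurry fun s t => w1 t * (w2 s * M0 (t, s)))
      ((volume.restrict (Ioc c d)).prod (volume.restrict (Ioc a b))) := by
    have base : Integrable (fun z : ℝ × ℝ => w2 z.1 * (w1 z.2 * M0 (z.2, z.1)))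
        ((volume.restrict (Ioc c d)).prod (volume.restrict (Ioc a b))) := by
      exact integrable_rect hw2.integrableOn hw1.integrableOn
        (hM0c.comp continuous_swap).aestronglyMeasurable
        (fun p hp => hDM p ⟨Ioc_subset_Icc_self hp.1, Ioc_subset_Icc_self hp.2⟩)
    exact base.congr (Filter.Eventually.of_forall fun z => mul_left_comm _ _ _)
  have step5 : (∫ s in c..d, ∫ t in a..b, w1 t * (w2 s * M0 (t, s)))
      = ∫ t in a..b, ∫ s in c..d, w1 t * (w2 s * M0 (t, s)) :=
    swap_rect hcd' hab' (fun s t => w1 t * (w2 s * M0 (t, s))) hint2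
  -- Step 6: evaluate M0 on the rectangle via the fundamental theorem of calculus
  have step6 : (∫ t in a..b, ∫ s in c..d, w1 t * (w2 s * M0 (t, s)))
      = ∫ t in a..b, ∫ s in c..d, w1 t * (w2 s * R' (t, s)) := by
    refine intervalIntegral.integral_congr fun t ht => ?_
    rw [uIcc_of_le hab'] at ht
    refine intervalIntegral.integral_congr fun s hs => ?_
    rw [uIcc_of_le hcd'] at hs
    have key1 : ∀ u ∈ Icc a b, HasDerivAt (fun u' => f u' y - f u' s) (G0 (u, s)) u := by
      intro u hu
      have h1 := (hfx u hu y hy).sub (hfx u hu s hs)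
      have hder : ∀ v ∈ uIcc s y, HasDerivAt (fun v' => fx u v') (g (u, v)) v := by
        intro v hv
        have hv' : v ∈ Icc c d := hsubcd hs hy hv
        have h3 := hfxy u hu v hv'
        rw [← hg u v hu hv'] at h3
        exact h3
      have hint : IntervalIntegrable (fun v => g (u, v)) volume s y :=
        (hgc.comp (Continuous.prodMk_right u)).intervalIntegrable s y
      have h2 : G0 (u, s) = fx u y - fx u s :=
        intervalIntegral.integral_eq_sub_of_hasDerivAt hder hint
      rw [h2]
      exact h1
    have hM : M0 (t, s) = f x y - f x s - (f t y - f t s) := by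
      have hint : IntervalIntegrable (fun u => G0 (u, s)) volume t x :=
        (hG0c.comp (continuous_id.prodMk continuous_const)).intervalIntegrable t x
      exact intervalIntegral.integral_eq_sub_of_hasDerivAt
        (fun u hu => key1 u (hsubab ht hx hu)) hint
    have hR : R' (t, s) = f x y - f x s - (f t y - f t s) := by
      rw [hR'def]
      simp only
      rw [hgf x s hx hs, hgf t y ht hy, hgf t s ht hs]
      ring
    rw [hM, hR]
  -- Step 7: expand and compute the four product integrals
  have hint3 : Integrable (fun z : ℝ × ℝ => w1 z.1 * (w2 z.2 * R' z))
      ((volume.restrict (Ioc a b)).prod (volume.restrict (Ioc c d))) := by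
    exact integrable_rect hw1.integrableOn hw2.integrableOn hR'c.aestronglyMeasurable
      (fun p hp => hDR p ⟨Ioc_subset_Icc_self hp.1, Ioc_subset_Icc_self hp.2⟩)
  have step7 : (∫ t in a..b, ∫ s in c..d, w1 t * (w2 s * R' (t, s)))
      = ∫ z : ℝ × ℝ, w1 z.1 * (w2 z.2 * R' z)
          ∂((volume.restrict (Ioc a b)).prod (volume.restrict (Ioc c d))) := by
    rw [intervalIntegral.integral_of_le hab']
    simp_rw [intervalIntegral.integral_of_le hcd']
    exact (integral_prod _ hint3).symm
  -- integrability of the four pieces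
  have hT1 : Integrable (fun z : ℝ × ℝ => w1 z.1 * (w2 z.2 * f x y))
      ((volume.restrict (Ioc a b)).prod (volume.restrict (Ioc c d))) :=
    hw1.integrableOn.mul_prod (hw2.integrableOn.mul_const (f x y))
  have hT2 : Integrable (fun z : ℝ × ℝ => w1 z.1 * (w2 z.2 * gf (x, z.2)))
      ((volume.restrict (Ioc a b)).prod (volume.restrict (Ioc c d))) := by
    have h2 : IntegrableOn (fun s => w2 s * gf (x, s)) (Ioc c d) :=
      ((hw2.intervalIntegrable (a := c) (b := d)).mul_continuousOn
        ((hgfc.comp (continuous_const.prodMk continuous_id)).continuousOn)).1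
    exact hw1.integrableOn.mul_prod h2
  have hT3 : Integrable (fun z : ℝ × ℝ => w1 z.1 * (w2 z.2 * gf (z.1, y)))
      ((volume.restrict (Ioc a b)).prod (volume.restrict (Ioc c d))) := by
    have h1 : IntegrableOn (fun t => w1 t * gf (t, y)) (Ioc a b) :=
      ((hw1.intervalIntegrable (a := a) (b := b)).mul_continuousOn
        ((hgfc.comp (continuous_id.prodMk continuous_const)).continuousOn)).1
    have base : Integrable (fun z : ℝ × ℝ => (w1 z.1 * gf (z.1, y)) * w2 z.2)
        ((volume.restrict (Ioc a b)).prod (volume.restrict (Ioc c d))) :=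
      h1.mul_prod hw2.integrableOn
    exact base.congr (Filter.Eventually.of_forall fun z => by ring)
  have hT4 : Integrable (fun z : ℝ × ℝ => w1 z.1 * (w2 z.2 * gf z))
      ((volume.restrict (Ioc a b)).prod (volume.restrict (Ioc c d))) := by
    exact integrable_rect hw1.integrableOn hw2.integrableOn hgfc.aestronglyMeasurable
      (fun p hp => hDf p ⟨Ioc_subset_Icc_self hp.1, Ioc_subset_Icc_self hp.2⟩)
  -- translate truncated integrals back to the original data
  have m1 : (∫ t, w1 t ∂(volume.restrict (Ioc a b))) = ∫ u in a..b, w u := by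
    rw [intervalIntegral.integral_of_le hab']
    exact setIntegral_congr_fun measurableSet_Ioc fun u hu => hw1e u (Ioc_subset_Icc_self hu)
  have m2 : (∫ s, w2 s ∂(volume.restrict (Ioc c d))) = ∫ u in c..d, w u := by
    rw [intervalIntegral.integral_of_le hcd']
    exact setIntegral_congr_fun measurableSet_Ioc fun u hu => hw2e u (Ioc_subset_Icc_self hu)
  set mu : Measure (ℝ × ℝ) := (volume.restrict (Ioc a b)).prod (volume.restrict (Ioc c d))
    with hmudef
  have c1 : (∫ z : ℝ × ℝ, w1 z.1 * (w2 z.2 * f x y) ∂mu)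
      = (∫ u in a..b, w u) * ((∫ u in c..d, w u) * f x y) := by
    have e : (∫ z : ℝ × ℝ, w1 z.1 * (w2 z.2 * f x y) ∂mu)
        = (∫ t, w1 t ∂(volume.restrict (Ioc a b)))
          * ∫ s, w2 s * f x y ∂(volume.restrict (Ioc c d)) :=
      integral_prod_mul w1 (fun s => w2 s * f x y)
    have e2 : (∫ s, w2 s * f x y ∂(volume.restrict (Ioc c d)))
        = (∫ u in c..d, w u) * f x y := by
      rw [MeasureTheory.integral_mul_const, m2]
    rw [e, m1, e2]
  have c2 : (∫ z : ℝ × ℝ, w1 z.1 * (w2 z.2 * gf (x, z.2)) ∂mu)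
      = (∫ u in a..b, w u) * (∫ s in c..d, w s * f x s) := by
    have e : (∫ z : ℝ × ℝ, w1 z.1 * (w2 z.2 * gf (x, z.2)) ∂mu)
        = (∫ t, w1 t ∂(volume.restrict (Ioc a b)))
          * ∫ s, w2 s * gf (x, s) ∂(volume.restrict (Ioc c d)) :=
      integral_prod_mul w1 (fun s => w2 s * gf (x, s))
    rw [e, m1]
    congr 1
    rw [intervalIntegral.integral_of_le hcd']
    refine setIntegral_congr_fun measurableSet_Ioc fun s hs => ?_
    have hs' : s ∈ Icc c d := Ioc_subset_Icc_self hs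
    rw [hw2e s hs', hgf x s hx hs']
  have c3 : (∫ z : ℝ × ℝ, w1 z.1 * (w2 z.2 * gf (z.1, y)) ∂mu)
      = (∫ t in a..b, w t * f t y) * (∫ u in c..d, w u) := by
    have e0 : (∫ z : ℝ × ℝ, w1 z.1 * (w2 z.2 * gf (z.1, y)) ∂mu)
        = ∫ z : ℝ × ℝ, (w1 z.1 * gf (z.1, y)) * w2 z.2 ∂mu :=
      integral_congr_ae (Filter.Eventually.of_forall fun z => by ring)
    have e : (∫ z : ℝ × ℝ, (w1 z.1 * gf (z.1, y)) * w2 z.2 ∂mu)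
        = (∫ t, w1 t * gf (t, y) ∂(volume.restrict (Ioc a b)))
          * ∫ s, w2 s ∂(volume.restrict (Ioc c d)) :=
      integral_prod_mul (fun t => w1 t * gf (t, y)) w2
    rw [e0, e, m2]
    congr 1
    rw [intervalIntegral.integral_of_le hab']
    refine setIntegral_congr_fun measurableSet_Ioc fun t ht => ?_
    have ht' : t ∈ Icc a b := Ioc_subset_Icc_self ht
    rw [hw1e t ht', hgf t y ht' hy]
  have c4 : (∫ z : ℝ × ℝ, w1 z.1 * (w2 z.2 * gf z) ∂mu)
      = ∫ t in a..b, ∫ s in c..d, w t * w s * f t s := by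
    have e : (∫ z : ℝ × ℝ, w1 z.1 * (w2 z.2 * gf z) ∂mu)
        = ∫ t, (∫ s, w1 t * (w2 s * gf (t, s)) ∂(volume.restrict (Ioc c d)))
            ∂(volume.restrict (Ioc a b)) :=
      integral_prod _ hT4
    rw [e]
    rw [show (∫ t in a..b, ∫ s in c..d, w t * w s * f t s)
        = ∫ t in Ioc a b, ∫ s in c..d, w t * w s * f t s from
      intervalIntegral.integral_of_le hab']
    refine setIntegral_congr_fun measurableSet_Ioc fun t ht => ?_
    have ht' : t ∈ Icc a b := Ioc_subset_Icc_self ht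
    rw [show (∫ s in c..d, w t * w s * f t s) = ∫ s in Ioc c d, w t * w s * f t s from
      intervalIntegral.integral_of_le hcd']
    refine setIntegral_congr_fun measurableSet_Ioc fun s hs => ?_
    have hs' : s ∈ Icc c d := Ioc_subset_Icc_self hs
    rw [hw1e t ht', hw2e s hs', hgf t s ht' hs']
    ring
  -- split the integral into four pieces
  have e0 : (∫ z : ℝ × ℝ, w1 z.1 * (w2 z.2 * R' z) ∂mu)
      = ∫ z : ℝ × ℝ, (w1 z.1 * (w2 z.2 * f x y) - w1 z.1 * (w2 z.2 * gf (x, z.2))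
          - w1 z.1 * (w2 z.2 * gf (z.1, y))) + w1 z.1 * (w2 z.2 * gf z) ∂mu := by
    refine integral_congr_ae (Filter.Eventually.of_forall fun z => ?_)
    rw [hR'def]
    simp only
    ring
  have e1 : (∫ z : ℝ × ℝ, (w1 z.1 * (w2 z.2 * f x y) - w1 z.1 * (w2 z.2 * gf (x, z.2))
          - w1 z.1 * (w2 z.2 * gf (z.1, y))) + w1 z.1 * (w2 z.2 * gf z) ∂mu)
      = (∫ z : ℝ × ℝ, w1 z.1 * (w2 z.2 * f x y) - w1 z.1 * (w2 z.2 * gf (x, z.2))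
          - w1 z.1 * (w2 z.2 * gf (z.1, y)) ∂mu) + ∫ z : ℝ × ℝ, w1 z.1 * (w2 z.2 * gf z) ∂mu :=
    integral_add ((hT1.sub hT2).sub hT3) hT4
  have e2 : (∫ z : ℝ × ℝ, w1 z.1 * (w2 z.2 * f x y) - w1 z.1 * (w2 z.2 * gf (x, z.2))
          - w1 z.1 * (w2 z.2 * gf (z.1, y)) ∂mu)
      = (∫ z : ℝ × ℝ, w1 z.1 * (w2 z.2 * f x y) - w1 z.1 * (w2 z.2 * gf (x, z.2)) ∂mu)
        - ∫ z : ℝ × ℝ, w1 z.1 * (w2 z.2 * gf (z.1, y)) ∂mu :=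
    integral_sub (hT1.sub hT2) hT3
  have e3 : (∫ z : ℝ × ℝ, w1 z.1 * (w2 z.2 * f x y) - w1 z.1 * (w2 z.2 * gf (x, z.2)) ∂mu)
      = (∫ z : ℝ × ℝ, w1 z.1 * (w2 z.2 * f x y) ∂mu)
        - ∫ z : ℝ × ℝ, w1 z.1 * (w2 z.2 * gf (x, z.2)) ∂mu :=
    integral_sub hT1 hT2
  rw [step1, step2, step3, step4, step5, step6, step7, e0, e1, e2, e3, c1, c2, c3, c4]
  ring
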